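/- Sandqvist's result for the minimal system: For every atomic formula p, the minimal system validates ¬¬p→p, i.e., for every set S of atomic rules containing no assumption-discharging rules there is a closed S-valid argument for ((p→⊥)→⊥)→p, where acceptable extensions are the supersets of S consisting of such rules. -/
import Mathlib


/-!
Common framework for proof-theoretic validity (Prawitz / Piecha–Schroeder-Heister style).

* Propositional formulas over countably many atoms (`ℕ`), with `⊥`, `∧`, `∨`, `→`;
  `¬A` abbreviates `A → ⊥`.
* Higher-level atomic rules: a rule has a finite list of premises, each premise being
  a pair of (a finite list of lower-level rules that may be discharged, an atomic
  conclusion), together with an atomic conclusion.  An atomic axiom `p̄` is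
  `HLRule.mk [] p`; an assumption of an atom is identified with its axiom rule.
* `AtDeriv S p`: the atom `p` is derivable using only rules of `S`
  (discharged rules become available).
* `Deriv S Γ φ`: natural deduction NJ augmented with the atomic rules in `S`,
  from hypotheses `Γ`.  `⊢_IPC` is `Deriv ∅ ∅`.
* `Valid 𝔖 S φ` formalizes "there is a closed `S`-valid argument for `φ`" relative to
  the proof-theoretic system `𝔖` (acceptable extensions of `S` are the supersets of `S`
  belonging to `𝔖`).  Unfolding the inductive definition of `S`-validity of arguments
  (atomic case, closed introduction case, closed non-introduction case, open case)
  clause-by-clause on the conclusion yields exactly the following recursion on formulas: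
  a closed valid argument for `A ∧ B` reduces (via the non-introduction case) to one
  ending in `∧`-introduction, i.e. closed valid arguments for `A` and `B`; similarly for
  `∨`; a closed valid argument for `A → B` reduces to one ending in `→`-introduction,
  whose immediate subargument is an open argument of `B` from the assumption `A`, which
  by the open case is valid iff every acceptable extension `S' ∈ 𝔖` of `S` having a
  closed `S'`-valid argument for `A` has one for `B`; a closed valid argument for an
  atom `p` exists iff `p` is `S`-derivable; and for `⊥` (which has no introduction rule,
  and is governed by the rules `⊥/p` for every atom `p`) iff every atom is `S`-derivable.
-/

/-- Propositional formulas over atoms `ℕ`. -/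
inductive PropForm : Type
  | atom : ℕ → PropForm
  | falsum : PropForm
  | conj : PropForm → PropForm → PropForm
  | disj : PropForm → PropForm → PropForm
  | impl : PropForm → PropForm → PropForm
  deriving DecidableEq

/-- `¬A` abbreviates `A → ⊥`. -/
def PropForm.neg (A : PropForm) : PropForm := .impl A .falsum

/-- Higher-level atomic rules. -/
inductive HLRule : Type
  | mk : List (List HLRule × ℕ) → ℕ → HLRule

/-- `AtDeriv S p`: the atom `p` is derivable using only the atomic rules in `S`;
applying a rule requires deriving each premise with its discharged rules made available. -/
inductive AtDeriv : Set HLRule → ℕ → Prop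
  | app (S : Set HLRule) (prems : List (List HLRule × ℕ)) (concl : ℕ)
      (hmem : HLRule.mk prems concl ∈ S)
      (hprem : ∀ pr ∈ prems, AtDeriv (S ∪ {R | R ∈ pr.1}) pr.2) :
      AtDeriv S concl

/-- Natural deduction NJ for intuitionistic propositional logic, augmented with the
atomic rules in `S`, with hypotheses `Γ`.  `Deriv ∅ Γ φ` is `Γ ⊢_IPC φ`. -/
inductive Deriv : Set HLRule → Set PropForm → PropForm → Prop
  | hyp {S : Set HLRule} {Γ : Set PropForm} {A : PropForm} :
      A ∈ Γ → Deriv S Γ A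
  | falsumE {S : Set HLRule} {Γ : Set PropForm} {A : PropForm} :
      Deriv S Γ .falsum → Deriv S Γ A
  | andI {S : Set HLRule} {Γ : Set PropForm} {A B : PropForm} :
      Deriv S Γ A → Deriv S Γ B → Deriv S Γ (.conj A B)
  | andE1 {S : Set HLRule} {Γ : Set PropForm} {A B : PropForm} :
      Deriv S Γ (.conj A B) → Deriv S Γ A
  | andE2 {S : Set HLRule} {Γ : Set PropForm} {A B : PropForm} :
      Deriv S Γ (.conj A B) → Deriv S Γ B
  | orI1 {S : Set HLRule} {Γ : Set PropForm} {A B : PropForm} :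
      Deriv S Γ A → Deriv S Γ (.disj A B)
  | orI2 {S : Set HLRule} {Γ : Set PropForm} {A B : PropForm} :
      Deriv S Γ B → Deriv S Γ (.disj A B)
  | orE {S : Set HLRule} {Γ : Set PropForm} {A B C : PropForm} :
      Deriv S Γ (.disj A B) → Deriv S (insert A Γ) C → Deriv S (insert B Γ) C →
      Deriv S Γ C
  | implI {S : Set HLRule} {Γ : Set PropForm} {A B : PropForm} :
      Deriv S (insert A Γ) B → Deriv S Γ (.impl A B)
  | implE {S : Set HLRule} {Γ : Set PropForm} {A B : PropForm} :
      Deriv S Γ (.impl A B) → Deriv S Γ A → Deriv S Γ B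
  | rule {S : Set HLRule} {Γ : Set PropForm}
      (prems : List (List HLRule × ℕ)) (concl : ℕ) :
      HLRule.mk prems concl ∈ S →
      (∀ pr ∈ prems, Deriv (S ∪ {R | R ∈ pr.1}) Γ (.atom pr.2)) →
      Deriv S Γ (.atom concl)

/-- `⊢_IPC φ` : derivability of `φ` in intuitionistic propositional natural deduction. -/
def IPC (φ : PropForm) : Prop := Deriv ∅ ∅ φ

/-- Auxiliary form of validity, by recursion on the formula. -/
def ValidAux (𝔖 : Set (Set HLRule)) : PropForm → Set HLRule → Prop
  | .atom p, S => AtDeriv S p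
  | .falsum, S => ∀ a : ℕ, AtDeriv S a
  | .conj A B, S => ValidAux 𝔖 A S ∧ ValidAux 𝔖 B S
  | .disj A B, S => ValidAux 𝔖 A S ∨ ValidAux 𝔖 B S
  | .impl A B, S => ∀ S' ∈ 𝔖, S ⊆ S' → ValidAux 𝔖 A S' → ValidAux 𝔖 B S'

/-- `Valid 𝔖 S φ`: relative to the proof-theoretic system `𝔖` (in which the acceptable
extensions of `S` are exactly the supersets of `S` belonging to `𝔖`), there is a closed
`S`-valid argument for `φ`. -/
def Valid (𝔖 : Set (Set HLRule)) (S : Set HLRule) (φ : PropForm) : Prop :=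
  ValidAux 𝔖 φ S

/-- `𝔖 ⊨ φ`: for every `S ∈ 𝔖` there is a closed `S`-valid argument for `φ`
(acceptable extensions taken in `𝔖`). -/
def Models (𝔖 : Set (Set HLRule)) (φ : PropForm) : Prop :=
  ∀ S ∈ 𝔖, Valid 𝔖 S φ

/-- The complete proof-theoretic system: all sets of atomic rules of all levels. -/
def completeSystem : Set (Set HLRule) := Set.univ

/-- `S`-validity of the open one-premise/one-assumption argument from `A` to `B`
(relative to `𝔖`): by the open case, for every acceptable extension `S' ∈ 𝔖` of `S`,
substituting any closed `S'`-valid argument for the assumption `A` yields an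
`S'`-valid closed argument, which (the final step not being an introduction rule)
amounts to the existence of a closed `S'`-valid argument for `B`. -/
def OpenArgValid1 (𝔖 : Set (Set HLRule)) (S : Set HLRule) (A B : PropForm) : Prop :=
  ∀ S' ∈ 𝔖, S ⊆ S' → Valid 𝔖 S' A → Valid 𝔖 S' B

/-- A first-level atomic rule: one that discharges nothing, i.e. an atomic axiom or a
rule from atomic premises to an atomic conclusion. -/
def FirstLevel : HLRule → Prop
  | .mk prems _ => ∀ pr ∈ prems, pr.1 = []

/-- The minimal proof-theoretic system: its members are exactly the sets of atomic
rules that discharge nothing; acceptable extensions of such an `S` are its supersets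
in the minimal system. -/
def minimalSystem : Set (Set HLRule) := {S | ∀ R ∈ S, FirstLevel R}

/-- The extension rules `p/a` for every atom `a`. -/
def ExtRules (p : ℕ) : Set HLRule := {R | ∃ a : ℕ, R = HLRule.mk [([], p)] a}

lemma extRules_firstLevel (p : ℕ) : ∀ R ∈ ExtRules p, FirstLevel R := by
  rintro R ⟨a, rfl⟩
  intro pr hpr
  simp only [List.mem_singleton] at hpr
  subst hpr; rfl

lemma empty_discharge (T : Set HLRule) : T ∪ {R | R ∈ ([] : List HLRule)} = T := by
  simp

/-- Separation lemma: derivability in `S' ∪ ExtRules p` of any atom `q` yields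
derivability of `p` or of `q` in `S'` alone. -/
lemma sep (p : ℕ) (S' : Set HLRule) (hS' : S' ∈ minimalSystem) :
    ∀ T q, AtDeriv T q → T ⊆ S' ∪ ExtRules p → AtDeriv S' p ∨ AtDeriv S' q := by
  intro T q h
  induction h with
  | app T prems concl hmem hprem ih =>
    intro hsub
    rcases hsub hmem with hmem' | ⟨a, ha⟩
    · -- rule in S', first level
      have hfl : ∀ pr ∈ prems, pr.1 = [] := hS' _ hmem'
      by_cases hp : AtDeriv S' p
      · exact Or.inl hp
      · right
        refine AtDeriv.app S' prems concl hmem' ?_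
        intro pr hpr
        have h1 : T ∪ {R | R ∈ pr.1} ⊆ S' ∪ ExtRules p := by
          rw [hfl pr hpr]
          rw [show T ∪ {R | R ∈ ([] : List HLRule)} = T from empty_discharge T]
          exact hsub
        rcases ih pr hpr h1 with h | h
        · exact absurd h hp
        · have : S' ∪ {R | R ∈ pr.1} = S' := by
            rw [hfl pr hpr]; exact empty_discharge S'
          rw [this]; exact h
    · -- rule in ExtRules p : mk [([],p)] a
      cases ha
      have hmp : ([([], p)] : List (List HLRule × ℕ)).Mem (([], p)) := List.mem_singleton.mpr rfl
      have h1 : T ∪ {R | R ∈ (([], p) : List HLRule × ℕ).1} ⊆ S' ∪ ExtRules p := by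
        rw [show T ∪ {R | R ∈ ([] : List HLRule)} = T from empty_discharge T]
        exact hsub
      rcases ih (([], p)) hmp h1 with h | h
      · exact Or.inl h
      · exact Or.inl h

/-- **Sandqvist's result for the minimal system.**  For every atom `p` and every set
`S` of atomic rules containing no assumption-discharging rules, there is a closed
`S`-valid argument (relative to the minimal system) for `¬¬p → p`, i.e. for
`((p → ⊥) → ⊥) → p`. -/
theorem sandqvist_minimal_dne (p : ℕ) (S : Set HLRule) (hS : S ∈ minimalSystem) :
    Valid minimalSystem S
      (.impl (PropForm.neg (PropForm.neg (.atom p))) (.atom p)) := by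
  intro S' hS' _hsub hnn
  -- hnn : ValidAux minimalSystem (¬¬ atom p) S'
  set T : Set HLRule := S' ∪ ExtRules p with hT
  have hTmin : T ∈ minimalSystem := by
    rintro R (hR | hR)
    · exact hS' R hR
    · exact extRules_firstLevel p R hR
  have hnegp : ValidAux minimalSystem (PropForm.neg (.atom p)) T := by
    intro S₃ _hS₃ hsub₃ hp a
    refine AtDeriv.app S₃ [([], p)] a ?_ ?_
    · exact hsub₃ (Or.inr ⟨a, rfl⟩)
    · intro pr hpr
      simp only [List.mem_singleton] at hpr
      subst hpr
      rw [show S₃ ∪ {R | R ∈ ([] : List HLRule)} = S₃ from empty_discharge S₃]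
      exact hp
  have hall : ∀ a : ℕ, AtDeriv T a :=
    hnn T hTmin (Set.subset_union_left) hnegp
  have := sep p S' hS' T p (hall p) (le_refl _)
  rcases this with h | h <;> exact h
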